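/- For every α ∈ (0,1), all solutions of the difference equation x_{n+1} = xₙ + e(n^α) (n ≥ 1) over ℂ are unbounded. -/

import Mathlib

/-- `e(x) = e^{2πix}`. -/
noncomputable def e (x : ℝ) : ℂ := Complex.exp (2 * Real.pi * Complex.I * x)

/-- Bernoulli-type upper bound: `(t+s)^α ≤ t^α + α s t^(α-1)` for `0 ≤ α ≤ 1`. -/
lemma bern_aux {α : ℝ} (hα0 : 0 ≤ α) (hα1 : α ≤ 1) {t s : ℝ} (ht : 0 < t) (hs : 0 ≤ s) :
    (t + s) ^ α ≤ t ^ α + α * s * t ^ (α - 1) := by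
  have h1 : t + s = t * (1 + s / t) := by field_simp
  have hst : (0:ℝ) ≤ s / t := by positivity
  rw [h1, Real.mul_rpow ht.le (by positivity)]
  have h2 : (1 + s / t) ^ α ≤ 1 + α * (s / t) :=
    rpow_one_add_le_one_add_mul_self (by linarith) hα0 hα1
  calc t ^ α * (1 + s / t) ^ α ≤ t ^ α * (1 + α * (s / t)) := by
        exact mul_le_mul_of_nonneg_left h2 (Real.rpow_nonneg ht.le _)
    _ = t ^ α + α * s * t ^ (α - 1) := by
        rw [Real.rpow_sub ht, Real.rpow_one]
        field_simp

/-- Real part of `e θ` is `cos (2πθ)`. -/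
lemma e_re (θ : ℝ) : (e θ).re = Real.cos (2 * Real.pi * θ) := by
  have : (2 : ℂ) * Real.pi * Complex.I * θ = ((2 * Real.pi * θ : ℝ) : ℂ) * Complex.I := by
    push_cast; ring
  rw [e, this, Complex.exp_ofReal_mul_I_re]

/-- If `K ≤ θ ≤ K + 1/8` with `K : ℕ`, then `Re (e θ) ≥ 1/2`. -/
lemma e_re_ge {K : ℕ} {θ : ℝ} (h1 : (K:ℝ) ≤ θ) (h2 : θ ≤ K + 1/8) :
    (1:ℝ)/2 ≤ (e θ).re := by
  rw [e_re]
  have hδ : θ = (θ - K) + K := by ring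
  have hcos : Real.cos (2 * Real.pi * θ) = Real.cos (2 * Real.pi * (θ - K)) := by
    have : 2 * Real.pi * θ = 2 * Real.pi * (θ - K) + (K:ℝ) * (2 * Real.pi) := by ring
    rw [this, Real.cos_add_nat_mul_two_pi]
  rw [hcos]
  have hπ : (0:ℝ) < Real.pi := Real.pi_pos
  have h3 : 0 ≤ 2 * Real.pi * (θ - K) := by nlinarith
  have h4 : 2 * Real.pi * (θ - K) ≤ Real.pi / 4 := by nlinarith
  have h5 : Real.cos (Real.pi / 4) ≤ Real.cos (2 * Real.pi * (θ - K)) :=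
    Real.cos_le_cos_of_nonneg_of_le_pi h3 (by linarith) h4
  have h6 : Real.cos (Real.pi / 4) = Real.sqrt 2 / 2 := Real.cos_pi_div_four
  have h7 : (1:ℝ) ≤ Real.sqrt 2 := by
    rw [show (1:ℝ) = Real.sqrt 1 by simp]
    exact Real.sqrt_le_sqrt (by norm_num)
  linarith

/-- for every `α ∈ (0,1)`, all solutions of
`x_{n+1} = xₙ + e(n^α)` (n ≥ 1) are unbounded. -/
theorem stmt_14 (α : ℝ) (hα0 : 0 < α) (hα1 : α < 1) :
    ∀ x : ℕ → ℂ, (∀ n, 1 ≤ n → x (n + 1) = x n + e ((n : ℝ) ^ α)) →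
      ¬ ∃ C : ℝ, ∀ n, 1 ≤ n → ‖x n‖ ≤ C := by
  intro x hx ⟨C, hC⟩
  set β : ℝ := 1 / α with hβdef
  have hβ1 : 1 < β := by
    rw [hβdef]
    rw [lt_div_iff₀ hα0]
    linarith
  have hβα : β * α = 1 := by
    rw [hβdef]; field_simp
  -- choose K
  set M : ℝ := max 16 (16 * α * (4 * C + 2)) with hMdef
  have hM16 : (16:ℝ) ≤ M := le_max_left _ _
  have hM0 : (0:ℝ) ≤ M := by linarith
  obtain ⟨K, hK⟩ := exists_nat_ge (max 1 (M ^ (1 / (β - 1))))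
  have hK1 : (1:ℝ) ≤ K := le_trans (le_max_left _ _) hK
  have hKM : M ≤ (K:ℝ) ^ (β - 1) := by
    have h0 : M ^ (1 / (β - 1)) ≤ (K:ℝ) := le_trans (le_max_right _ _) hK
    have h1 : (M ^ (1 / (β - 1))) ^ (β - 1) ≤ (K:ℝ) ^ (β - 1) :=
      Real.rpow_le_rpow (Real.rpow_nonneg hM0 _) h0 (by linarith)
    rwa [← Real.rpow_mul hM0, one_div, inv_mul_cancel₀ (by linarith), Real.rpow_one] at h1
  have hKβ1 : (1:ℝ) ≤ (K:ℝ) ^ β := Real.one_le_rpow hK1 (by linarith)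
  have hKβ0 : (0:ℝ) ≤ (K:ℝ) ^ β := by linarith
  set a : ℕ := ⌈(K:ℝ) ^ β⌉₊ with hadef
  have ha1 : 1 ≤ a := by
    rw [hadef]
    exact Nat.one_le_ceil_iff.mpr (by linarith)
  have haK : (K:ℝ) ^ β ≤ (a:ℝ) := Nat.le_ceil _
  have ha0 : (0:ℝ) < a := by
    have : (1:ℕ) ≤ a := ha1
    exact_mod_cast this
  have haK' : (a:ℝ) ≤ (K:ℝ) ^ β + 1 := by
    have := Nat.ceil_lt_add_one hKβ0
    rw [hadef]
    linarith
  set L : ℕ := ⌊(a:ℝ) ^ (1 - α) / (16 * α)⌋₊ with hLdef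
  have hLle : (L:ℝ) ≤ (a:ℝ) ^ (1 - α) / (16 * α) :=
    Nat.floor_le (by positivity)
  have hA1α : (K:ℝ) ^ (β - 1) ≤ (a:ℝ) ^ (1 - α) := by
    have h1 : ((K:ℝ) ^ β) ^ (1 - α) ≤ (a:ℝ) ^ (1 - α) :=
      Real.rpow_le_rpow hKβ0 haK (by linarith)
    rwa [← Real.rpow_mul (by positivity), show β * (1 - α) = β - 1 by
      rw [mul_sub, mul_one, hβα]] at h1
  have hLge : 4 * C + 1 ≤ (L:ℝ) := by
    have h1 : (a:ℝ) ^ (1 - α) / (16 * α) - 1 < (L:ℝ) := by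
      have := Nat.sub_one_lt_floor ((a:ℝ) ^ (1 - α) / (16 * α))
      rw [hLdef]; exact_mod_cast this
    have h2 : 16 * α * (4 * C + 2) ≤ (a:ℝ) ^ (1 - α) := le_trans (le_trans (le_max_right _ _) hKM) hA1α
    have h3 : 4 * C + 2 ≤ (a:ℝ) ^ (1 - α) / (16 * α) := by
      rw [le_div_iff₀ (by positivity)]
      linarith
    linarith
  -- key phase bounds
  have key : ∀ j : ℕ, j ≤ L → (K:ℝ) ≤ ((a + j : ℕ):ℝ) ^ α ∧ ((a + j : ℕ):ℝ) ^ α ≤ K + 1/8 := by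
    intro j hj
    have hn : (a:ℝ) ≤ ((a + j : ℕ):ℝ) := by push_cast; linarith [Nat.cast_nonneg (α := ℝ) j]
    have hn' : ((a + j : ℕ):ℝ) ≤ (a:ℝ) + (L:ℝ) := by
      push_cast
      have : (j:ℝ) ≤ (L:ℝ) := by exact_mod_cast hj
      linarith
    constructor
    · have h1 : (K:ℝ) ^ β ≤ ((a + j : ℕ):ℝ) := le_trans haK hn
      have h2 : ((K:ℝ) ^ β) ^ α ≤ ((a + j : ℕ):ℝ) ^ α :=
        Real.rpow_le_rpow hKβ0 h1 hα0.le
      rwa [← Real.rpow_mul (by positivity), hβα, Real.rpow_one] at h2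
    · have h1 : ((a + j : ℕ):ℝ) ^ α ≤ ((a:ℝ) + (L:ℝ)) ^ α :=
        Real.rpow_le_rpow (by positivity) hn' hα0.le
      have h2 : ((a:ℝ) + (L:ℝ)) ^ α ≤ (a:ℝ) ^ α + α * (L:ℝ) * (a:ℝ) ^ (α - 1) :=
        bern_aux hα0.le hα1.le ha0 (Nat.cast_nonneg L)
      -- bound α * L * a^(α-1) ≤ 1/16
      have h3 : α * (L:ℝ) * (a:ℝ) ^ (α - 1) ≤ 1/16 := by
        have hL' : α * (L:ℝ) ≤ (a:ℝ) ^ (1 - α) / 16 := by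
          rw [le_div_iff₀ (by positivity : (0:ℝ) < 16 * α)] at hLle
          rw [le_div_iff₀ (by norm_num : (0:ℝ) < 16)]
          nlinarith
        have hpos : (0:ℝ) < (a:ℝ) ^ (α - 1) := Real.rpow_pos_of_pos ha0 _
        have hmul : (a:ℝ) ^ (1 - α) * (a:ℝ) ^ (α - 1) = 1 := by
          rw [← Real.rpow_add ha0]
          norm_num
        calc α * (L:ℝ) * (a:ℝ) ^ (α - 1) ≤ (a:ℝ) ^ (1 - α) / 16 * (a:ℝ) ^ (α - 1) := by
              exact mul_le_mul_of_nonneg_right hL' hpos.le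
          _ = 1/16 := by rw [div_mul_eq_mul_div, hmul]
      -- bound a^α ≤ K + 1/16
      have h4 : (a:ℝ) ^ α ≤ (K:ℝ) + 1/16 := by
        have h5 : (a:ℝ) ^ α ≤ ((K:ℝ) ^ β + 1) ^ α :=
          Real.rpow_le_rpow ha0.le haK' hα0.le
        have h6 : ((K:ℝ) ^ β + 1) ^ α ≤ ((K:ℝ) ^ β) ^ α + α * 1 * ((K:ℝ) ^ β) ^ (α - 1) :=
          bern_aux hα0.le hα1.le (by linarith) zero_le_one
        have h7 : ((K:ℝ) ^ β) ^ α = (K:ℝ) := by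
          rw [← Real.rpow_mul (by positivity), hβα, Real.rpow_one]
        have h8 : ((K:ℝ) ^ β) ^ (α - 1) ≤ 1 := by
          apply Real.rpow_le_one_of_one_le_of_nonpos hKβ1 (by linarith)
        have h8' : ((K:ℝ) ^ β) ^ (α - 1) = ((K:ℝ) ^ (β - 1))⁻¹ := by
          rw [← Real.rpow_mul (by positivity), show β * (α - 1) = -(β - 1) by
            rw [mul_sub, mul_one, hβα]; ring, Real.rpow_neg (by positivity)]
        have hK16 : (16:ℝ) ≤ (K:ℝ) ^ (β - 1) := le_trans hM16 hKM
        have h9 : α * 1 * ((K:ℝ) ^ β) ^ (α - 1) ≤ 1/16 := by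
          rw [h8', mul_one]
          have hKpos : (0:ℝ) < (K:ℝ) ^ (β - 1) := by linarith
          have hinv : ((K:ℝ) ^ (β - 1))⁻¹ ≤ 1/16 := by
            rw [inv_le_comm₀ hKpos (by norm_num)]
            linarith
          nlinarith [inv_nonneg.mpr hKpos.le]
        rw [h7] at h6
        linarith
      linarith
  -- telescoping: real parts increase
  have step : ∀ j : ℕ, j ≤ L → (x a).re + ((j:ℝ) + 1) / 2 ≤ (x (a + j + 1)).re := by
    intro j
    induction j with
    | zero =>
      intro _
      obtain ⟨hk1, hk2⟩ := key 0 (Nat.zero_le L)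
      have hre := e_re_ge hk1 hk2
      have heq : a + 0 + 1 = a + 1 := rfl
      have heq2 : ((a + 0 : ℕ):ℝ) = (a:ℝ) := by norm_num
      rw [heq, hx a ha1, Complex.add_re]
      rw [heq2] at hre
      push_cast
      linarith
    | succ j ih =>
      intro hj
      have hj' : j ≤ L := Nat.le_of_succ_le hj
      have hrec := hx (a + j + 1) (by omega)
      obtain ⟨hk1, hk2⟩ := key (j + 1) hj
      have hre : (1:ℝ)/2 ≤ (e (((a + (j+1) : ℕ):ℝ) ^ α)).re := e_re_ge hk1 hk2
      have heq : a + (j + 1) + 1 = (a + j + 1) + 1 := by omega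
      have heq2 : a + (j + 1) = (a + j + 1) := by omega
      rw [heq, hrec, Complex.add_re]
      have := ih hj'
      rw [heq2] at hre
      push_cast at *
      linarith
  -- contradiction
  have hub := step L le_rfl
  have h1 : (x (a + L + 1)).re ≤ C := by
    have := hC (a + L + 1) (by omega)
    have habs := Complex.abs_re_le_norm (x (a + L + 1))
    have := abs_le.mp (le_trans habs this)
    exact this.2
  have h2 : -C ≤ (x a).re := by
    have := hC a ha1
    have habs := Complex.abs_re_le_norm (x a)
    have := abs_le.mp (le_trans habs this)
    linarith [this.1]
  linarith
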